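/- arXiv:2002.08848 — 2 statements merged into one kernel-verified Lean document; each statement's English description precedes it below -/
import Mathlib

section
/- Let $\alpha \geq 1$ and let $\theta$ be a random branching operator with offspring vectors $\mathbf{A}_{i;j}$ such that $\mathbb{E}\|\theta \circ \mathbf{k}\|^\alpha \leq \mu \|\mathbf{k}\|^\alpha$ for all $\|\mathbf{k}\| \geq k_0$, with $\mu < 1$. Let $\mathbf{Z}$ be a random vector with nonnegative integer components, independent of the $\mathbf{A}$'s. Then $\mathbb{E}\|\theta \circ \mathbf{Z}\|^\alpha \leq \mu\, \mathbb{E}\|\mathbf{Z}\|^\alpha + c_1\, \mathbb{E}\|\mathbf{Z}\|$, where $c_1 = \max_{\|\mathbf{k}\| < k_0} \mathbb{E}\|\theta\circ\mathbf{k}\|^\alpha$. -/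
open MeasureTheory ProbabilityTheory Finset
open scoped ENNReal

/-- `theta A k ω = ∑ j, ∑_{i < k j} A j i ω` is the branching operator with
offspring vectors `A j i : Ω → Fin d → ℕ`; `l`-th coordinate is the number of
type-`l` offspring of the population `k`. -/
noncomputable def theta {Ω : Type*} {d : ℕ} (A : Fin d → ℕ → Ω → Fin d → ℕ)
    (k : Fin d → ℕ) (ω : Ω) : Fin d → ℕ :=
  fun l => ∑ j, ∑ i ∈ range (k j), A j i ω l

lemma lintegral_fiber_decomp {Ω : Type*} [MeasureSpace Ω] {d : ℕ}
    (Z : Ω → Fin d → ℕ) (hZ : Measurable Z)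
    (G : (Fin d → ℕ) → Ω → ℝ≥0∞) :
    ∫⁻ ω, G (Z ω) ω ∂ℙ = ∑' k : Fin d → ℕ, ∫⁻ ω in Z ⁻¹' {k}, G k ω ∂ℙ := by
  have hm : ∀ k : Fin d → ℕ, MeasurableSet (Z ⁻¹' {k}) :=
    fun k => hZ (measurableSet_singleton k)
  have hd : Pairwise (Function.onFun Disjoint fun k : Fin d → ℕ => Z ⁻¹' {k}) := by
    intro k k' hkk'
    exact Set.disjoint_left.2 fun ω h1 h2 => hkk' (h1.symm.trans h2)
  calc ∫⁻ ω, G (Z ω) ω ∂ℙ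
      = ∫⁻ ω in ⋃ k : Fin d → ℕ, Z ⁻¹' {k}, G (Z ω) ω ∂ℙ := by
        rw [← Set.preimage_iUnion, Set.iUnion_of_singleton, Set.preimage_univ,
          Measure.restrict_univ]
    _ = ∑' k : Fin d → ℕ, ∫⁻ ω in Z ⁻¹' {k}, G (Z ω) ω ∂ℙ := lintegral_iUnion hm hd _
    _ = ∑' k : Fin d → ℕ, ∫⁻ ω in Z ⁻¹' {k}, G k ω ∂ℙ := by
        refine tsum_congr fun k => setLIntegral_congr_fun (hm k) ?_
        intro ω hω
        rw [Set.mem_preimage, Set.mem_singleton_iff] at hω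
        simp only [hω]

/-- If `𝔼‖θ∘k‖^α ≤ μ ‖k‖^α` for all `‖k‖ ≥ k₀` with `μ < 1`, and `Z` is a random
nonnegative-integer vector independent of the offspring variables, then
`𝔼‖θ∘Z‖^α ≤ μ 𝔼‖Z‖^α + c₁ 𝔼‖Z‖`, where `c₁ = max_{‖k‖ < k₀} 𝔼‖θ∘k‖^α`. -/
theorem theta_of_random_vector_moment_bound
    {Ω : Type*} [MeasureSpace Ω] [IsProbabilityMeasure (ℙ : Measure Ω)]
    (d : ℕ) (A : Fin d → ℕ → Ω → Fin d → ℕ)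
    (hmeas : ∀ j i, Measurable (A j i))
    (α : ℝ) (hα : 1 ≤ α)
    (μ : ℝ) (hμ0 : 0 ≤ μ) (hμ1 : μ < 1) (k₀ : ℕ)
    (hcontr : ∀ k : Fin d → ℕ, k₀ ≤ ∑ j, k j →
      ∫⁻ ω, ((∑ l, theta A k ω l : ℕ) : ℝ≥0∞) ^ α ∂ℙ ≤
        ENNReal.ofReal μ * ((∑ j, k j : ℕ) : ℝ≥0∞) ^ α)
    (c₁ : ℝ≥0∞)
    (hc₁ : c₁ = ⨆ k : {k : Fin d → ℕ // ∑ j, k j < k₀},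
      ∫⁻ ω, ((∑ l, theta A k.1 ω l : ℕ) : ℝ≥0∞) ^ α ∂ℙ)
    (Z : Ω → Fin d → ℕ) (hZ : Measurable Z)
    (hindep : IndepFun Z (fun ω => fun j i => A j i ω) ℙ) :
    ∫⁻ ω, ((∑ l, theta A (Z ω) ω l : ℕ) : ℝ≥0∞) ^ α ∂ℙ ≤
      ENNReal.ofReal μ * ∫⁻ ω, ((∑ j, Z ω j : ℕ) : ℝ≥0∞) ^ α ∂ℙ +
        c₁ * ∫⁻ ω, ((∑ j, Z ω j : ℕ) : ℝ≥0∞) ∂ℙ := by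
  classical
  set W : Ω → Fin d → ℕ → Fin d → ℕ := fun ω => fun j i => A j i ω with hW_def
  have hW : Measurable W :=
    measurable_pi_lambda _ fun j => measurable_pi_lambda _ fun i =>
      measurable_pi_lambda _ fun l => (measurable_pi_apply l).comp (hmeas j i)
  -- the function of the offspring variables
  set Φ : (Fin d → ℕ) → (Fin d → ℕ → Fin d → ℕ) → ℝ≥0∞ :=
    fun k w => ((∑ l, ∑ j, ∑ i ∈ range (k j), w j i l : ℕ) : ℝ≥0∞) ^ α with hΦ_def
  have hΦmeas : ∀ k, Measurable (Φ k) := by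
    intro k
    have hN : Measurable fun w : Fin d → ℕ → Fin d → ℕ =>
        (∑ l, ∑ j, ∑ i ∈ range (k j), w j i l : ℕ) := by
      refine Finset.measurable_sum _ fun l _ => Finset.measurable_sum _ fun j _ =>
        Finset.measurable_sum _ fun i _ => ?_
      exact (measurable_pi_apply l).comp
        ((measurable_pi_apply i).comp (measurable_pi_apply j))
    exact ENNReal.continuous_rpow_const.measurable.comp
      (measurable_from_top.comp hN)
  have hθΦ : ∀ k ω, ((∑ l, theta A k ω l : ℕ) : ℝ≥0∞) ^ α = Φ k (W ω) := fun k ω => rfl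
  have hm : ∀ k : Fin d → ℕ, MeasurableSet (Z ⁻¹' {k}) :=
    fun k => hZ (measurableSet_singleton k)
  -- fiber integral equals ℙ(fiber) * I k by independence
  set I : (Fin d → ℕ) → ℝ≥0∞ := fun k => ∫⁻ ω, Φ k (W ω) ∂ℙ with hI_def
  have hfiber : ∀ k : Fin d → ℕ,
      ∫⁻ ω in Z ⁻¹' {k}, Φ k (W ω) ∂ℙ = ℙ (Z ⁻¹' {k}) * I k := by
    intro k
    have hind : Measurable (Set.indicator ({k} : Set (Fin d → ℕ)) (1 : (Fin d → ℕ) → ℝ≥0∞)) :=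
      measurable_one.indicator (measurableSet_singleton k)
    have hindep' : IndepFun (fun ω => Set.indicator ({k} : Set (Fin d → ℕ))
        (1 : (Fin d → ℕ) → ℝ≥0∞) (Z ω)) (fun ω => Φ k (W ω)) ℙ :=
      hindep.comp hind (hΦmeas k)
    have h1 : ∫⁻ ω in Z ⁻¹' {k}, Φ k (W ω) ∂ℙ =
        ∫⁻ ω, (fun ω => Set.indicator ({k} : Set (Fin d → ℕ)) (1 : (Fin d → ℕ) → ℝ≥0∞) (Z ω)) ω *
          (fun ω => Φ k (W ω)) ω ∂ℙ := by
      rw [← lintegral_indicator (hm k)]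
      refine lintegral_congr fun ω => ?_
      by_cases h : Z ω = k
      · simp [Set.indicator, h]
      · simp [Set.indicator, h]
    have h2 := lintegral_mul_eq_lintegral_mul_lintegral_of_indepFun
      (hind.comp hZ) ((hΦmeas k).comp hW) hindep'
    have h3 : ∫⁻ ω, Set.indicator ({k} : Set (Fin d → ℕ)) (1 : (Fin d → ℕ) → ℝ≥0∞) (Z ω) ∂ℙ =
        ℙ (Z ⁻¹' {k}) := by
      have : ∀ ω, Set.indicator ({k} : Set (Fin d → ℕ)) (1 : (Fin d → ℕ) → ℝ≥0∞) (Z ω) =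
          Set.indicator (Z ⁻¹' {k}) (1 : Ω → ℝ≥0∞) ω := by
        intro ω
        by_cases h : Z ω = k
        · simp [Set.indicator, h]
        · simp [Set.indicator, h]
      simp_rw [this]
      exact lintegral_indicator_one (hm k)
    rw [h1]
    calc ∫⁻ ω, (fun ω => Set.indicator ({k} : Set (Fin d → ℕ)) (1 : (Fin d → ℕ) → ℝ≥0∞) (Z ω)) ω *
          (fun ω => Φ k (W ω)) ω ∂ℙ
        = (∫⁻ ω, Set.indicator ({k} : Set (Fin d → ℕ)) (1 : (Fin d → ℕ) → ℝ≥0∞) (Z ω) ∂ℙ) *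
          ∫⁻ ω, Φ k (W ω) ∂ℙ := h2
      _ = ℙ (Z ⁻¹' {k}) * I k := by rw [h3]
  -- the key pointwise bound on I k
  have hIbound : ∀ k : Fin d → ℕ,
      I k ≤ ENNReal.ofReal μ * ((∑ j, k j : ℕ) : ℝ≥0∞) ^ α +
        c₁ * ((∑ j, k j : ℕ) : ℝ≥0∞) := by
    intro k
    by_cases hk : k₀ ≤ ∑ j, k j
    · calc I k ≤ ENNReal.ofReal μ * ((∑ j, k j : ℕ) : ℝ≥0∞) ^ α := hcontr k hk
        _ ≤ _ := le_self_add
    · push_neg at hk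
      by_cases h0 : ∑ j, k j = 0
      · have hk0 : ∀ j, k j = 0 := by
          intro j
          exact (Finset.sum_eq_zero_iff.1 h0) j (mem_univ j)
        have : I k = 0 := by
          have hΦ0 : ∀ ω, Φ k (W ω) = 0 := by
            intro ω
            have : (∑ l, ∑ j, ∑ i ∈ range (k j), W ω j i l : ℕ) = 0 := by
              simp [hk0]
            rw [hΦ_def]
            simp only [this, Nat.cast_zero]
            exact ENNReal.zero_rpow_of_pos (lt_of_lt_of_le zero_lt_one hα)
          simp [hI_def, hΦ0]
        simp [this]
      · have h1 : 1 ≤ ((∑ j, k j : ℕ) : ℝ≥0∞) := by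
          exact_mod_cast Nat.one_le_iff_ne_zero.2 h0
        have hIc : I k ≤ c₁ := by
          rw [hc₁]
          exact le_iSup (fun k : {k : Fin d → ℕ // ∑ j, k j < k₀} =>
            ∫⁻ ω, ((∑ l, theta A k.1 ω l : ℕ) : ℝ≥0∞) ^ α ∂ℙ) ⟨k, hk⟩
        calc I k ≤ c₁ := hIc
          _ = c₁ * 1 := (mul_one c₁).symm
          _ ≤ c₁ * ((∑ j, k j : ℕ) : ℝ≥0∞) := mul_le_mul_right h1 c₁
          _ ≤ _ := le_add_self
  -- decompose all three integrals over the fibers of Z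
  have hLHS : ∫⁻ ω, ((∑ l, theta A (Z ω) ω l : ℕ) : ℝ≥0∞) ^ α ∂ℙ =
      ∑' k : Fin d → ℕ, ℙ (Z ⁻¹' {k}) * I k := by
    have := lintegral_fiber_decomp Z hZ (fun k ω => Φ k (W ω))
    simp_rw [hθΦ]
    rw [this]
    exact tsum_congr hfiber
  have hR1 : ∫⁻ ω, ((∑ j, Z ω j : ℕ) : ℝ≥0∞) ^ α ∂ℙ =
      ∑' k : Fin d → ℕ, ℙ (Z ⁻¹' {k}) * ((∑ j, k j : ℕ) : ℝ≥0∞) ^ α := by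
    have := lintegral_fiber_decomp Z hZ
      (fun k _ => ((∑ j, k j : ℕ) : ℝ≥0∞) ^ α)
    rw [this]
    exact tsum_congr fun k => by rw [setLIntegral_const, mul_comm]
  have hR2 : ∫⁻ ω, ((∑ j, Z ω j : ℕ) : ℝ≥0∞) ∂ℙ =
      ∑' k : Fin d → ℕ, ℙ (Z ⁻¹' {k}) * ((∑ j, k j : ℕ) : ℝ≥0∞) := by
    have := lintegral_fiber_decomp Z hZ (fun k _ => ((∑ j, k j : ℕ) : ℝ≥0∞))
    rw [this]
    exact tsum_congr fun k => by rw [setLIntegral_const, mul_comm]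
  rw [hLHS, hR1, hR2, ← ENNReal.tsum_mul_left, ← ENNReal.tsum_mul_left, ← ENNReal.tsum_add]
  refine ENNReal.tsum_le_tsum fun k => ?_
  calc ℙ (Z ⁻¹' {k}) * I k
      ≤ ℙ (Z ⁻¹' {k}) * (ENNReal.ofReal μ * ((∑ j, k j : ℕ) : ℝ≥0∞) ^ α +
          c₁ * ((∑ j, k j : ℕ) : ℝ≥0∞)) := mul_le_mul_right (hIbound k) _
    _ = ENNReal.ofReal μ * (ℙ (Z ⁻¹' {k}) * ((∑ j, k j : ℕ) : ℝ≥0∞) ^ α) +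
          c₁ * (ℙ (Z ⁻¹' {k}) * ((∑ j, k j : ℕ) : ℝ≥0∞)) := by ring
end

section
/- Let $(\mathbf{X}_n)_{n\geq 0}$ be a subcritical $d$-type Galton--Watson process with immigration and let $0 < \alpha < 1$. If $\mathbb{E}\|\mathbf{A}_{1,1;i}\| < \infty$ for all $i$ (which holds by subcriticality) and $\mathbb{E}\|\mathbf{B}\|^\alpha < \infty$, then $\mathbf{Y} = \sum_{i=0}^\infty \Pi_i \circ \mathbf{B}_{i+1}$ satisfies $\mathbb{E}\|\mathbf{Y}\|^\alpha < \infty$. -/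
open MeasureTheory ProbabilityTheory Finset
open scoped ENNReal

/-- `PiComp A n Z = θ₀ ∘ θ₁ ∘ ⋯ ∘ θ_{n-1} ∘ Z`, where `θ_m` is the branching
operator built from the generation-`m` offspring variables `A m`. -/
noncomputable def PiComp {Ω : Type*} {d : ℕ}
    (A : ℕ → Fin d → ℕ → Ω → Fin d → ℕ) :
    ℕ → (Ω → Fin d → ℕ) → Ω → Fin d → ℕ
  | 0, Z => Z
  | n + 1, Z => fun ω => theta (A 0) (PiComp (fun m => A (m + 1)) n Z ω) ω

set_option linter.unusedSectionVars false

section helpers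

variable {Ω : Type*} [MeasurableSpace Ω] {d : ℕ}

lemma meas_nat_cases {α β : Type*} [MeasurableSpace α] [MeasurableSpace β]
    {g : α → ℕ} (hg : Measurable g) {F : ℕ → α → β} (hF : ∀ n, Measurable (F n)) :
    Measurable fun x => F (g x) x := by
  have : (fun x => F (g x) x) = (fun p : α × ℕ => F p.2 p.1) ∘ (fun x => (x, g x)) := rfl
  rw [this]
  have h2 : Measurable (fun p : α × ℕ => F p.2 p.1) := measurable_from_prod_countable_left fun n => hF n
  exact h2.comp (measurable_id.prodMk hg)

lemma measurable_theta {A : Fin d → ℕ → Ω → Fin d → ℕ} (hA : ∀ j i, Measurable (A j i))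
    {K : Ω → Fin d → ℕ} (hK : Measurable K) :
    Measurable fun ω => theta A (K ω) ω := by
  rw [measurable_pi_iff]
  intro l
  apply Finset.measurable_sum
  intro j _
  exact meas_nat_cases ((measurable_pi_apply j).comp hK)
    (fun n => Finset.measurable_sum _ fun i _ => (measurable_pi_apply l).comp (hA j i))

lemma measurable_piComp {A : ℕ → Fin d → ℕ → Ω → Fin d → ℕ} (hA : ∀ m j i, Measurable (A m j i))
    {Z : Ω → Fin d → ℕ} (hZ : Measurable Z) :
    ∀ n, Measurable (PiComp A n Z) := by
  intro n
  induction n generalizing A with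
  | zero => exact hZ
  | succ n ih =>
    exact measurable_theta (hA 0) (ih (fun m j i => hA (m+1) j i))

lemma piComp_congr {Ω' : Type*} {A : ℕ → Fin d → ℕ → Ω → Fin d → ℕ}
    {A' : ℕ → Fin d → ℕ → Ω' → Fin d → ℕ} {Z : Ω → Fin d → ℕ} {Z' : Ω' → Fin d → ℕ}
    {ω : Ω} {ω' : Ω'} (hA : ∀ m j i, A m j i ω = A' m j i ω') (hZ : Z ω = Z' ω') :
    ∀ n, PiComp A n Z ω = PiComp A' n Z' ω' := by
  intro n
  induction n generalizing A A' with
  | zero => exact hZ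
  | succ n ih =>
    have h := ih (A := fun m => A (m+1)) (A' := fun m => A' (m+1)) (fun m j i => hA (m+1) j i)
    simp only [PiComp, theta, h]
    funext l
    exact Finset.sum_congr rfl fun j _ => Finset.sum_congr rfl fun i _ => by rw [hA 0]

lemma tsum_ite_lt (m : ℕ) : ∑' i : ℕ, (if i < m then (1 : ℝ≥0∞) else 0) = m := by
  rw [tsum_eq_sum (s := range m) (by intro i hi; simp [Finset.mem_range] at hi; simp [hi])]
  rw [Finset.sum_ite_of_true (fun i hi => Finset.mem_range.mp hi)]
  simp [Finset.sum_const, card_range]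

end helpers

section indep
variable {Ω : Type*} [MeasurableSpace Ω] {μ : Measure Ω} [IsProbabilityMeasure μ]
  {ι : Type*} {V : Type*} {mV : MeasurableSpace V}

lemma iIndepFun_reindex {κ : Type*} {f : ι → Ω → V} (g : κ → ι) (hg : Function.Injective g)
    (h : iIndepFun f μ) : iIndepFun (fun k => f (g k)) μ := by
  classical
  rw [iIndepFun_iff_measure_inter_preimage_eq_mul] at h ⊢
  intro S sets hsets
  set sets' : ι → Set V := fun i => if h : ∃ k, g k = i then sets h.choose else Set.univ with hs'
  have key : ∀ k, sets' (g k) = sets k := by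
    intro k
    have he : ∃ k', g k' = g k := ⟨k, rfl⟩
    simp only [hs', dif_pos he]
    rw [hg he.choose_spec]
  have hmeas : ∀ i ∈ S.map ⟨g, hg⟩, MeasurableSet[mV] (sets' i) := by
    intro i hi
    rcases Finset.mem_map.mp hi with ⟨k, hk, rfl⟩
    simp only [Function.Embedding.coeFn_mk]
    rw [key]; exact hsets k hk
  have := h (S.map ⟨g, hg⟩) hmeas
  have hint : (⋂ i ∈ S.map ⟨g, hg⟩, f i ⁻¹' sets' i) = ⋂ k ∈ S, f (g k) ⁻¹' sets k := by
    ext ω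
    simp only [Set.mem_iInter, Finset.mem_map, Function.Embedding.coeFn_mk]
    constructor
    · intro hh k hk
      have := hh (g k) ⟨k, hk, rfl⟩
      rwa [key] at this
    · rintro hh i ⟨k, hk, rfl⟩
      rw [key]; exact hh k hk
  rw [hint] at this
  rw [this, Finset.prod_map]
  exact Finset.prod_congr rfl fun k _ => by simp only [Function.Embedding.coeFn_mk, key]

lemma indepFun_bundle {f : ι → Ω → V} (hf : ∀ i, Measurable (f i))
    (hindep : iIndepFun f μ) (S : Set ι) {j : ι} (hj : j ∉ S) :
    IndepFun (fun ω (p : S) => f p ω) (f j) μ := by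
  have h := hindep.iIndep
  have hle : ∀ i, MeasurableSpace.comap (f i) mV ≤ ‹MeasurableSpace Ω› :=
    fun i => (hf i).comap_le
  have hInd := indep_iSup_of_disjoint hle h (S := S) (T := {j})
    (Set.disjoint_singleton_right.mpr hj)
  have h1 : (⨆ i ∈ S, MeasurableSpace.comap (f i) mV)
      = MeasurableSpace.pi.comap (fun ω (p : S) => f p ω) := by
    rw [MeasurableSpace.pi, MeasurableSpace.comap_iSup]
    rw [iSup_subtype']
    congr 1
    funext p
    rw [MeasurableSpace.comap_comp]
    rfl
  have h2 : (⨆ i ∈ ({j} : Set ι), MeasurableSpace.comap (f i) mV)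
      = MeasurableSpace.comap (f j) mV := by
    simp
  rw [h1, h2] at hInd
  exact hInd

end indep

section wald
variable {Ω : Type*} [MeasurableSpace Ω] {μ : Measure Ω} [IsProbabilityMeasure μ]

lemma wald (K : Ω → ℕ) (hK : Measurable K) (X : ℕ → Ω → ℝ≥0∞) (hX : ∀ i, Measurable (X i))
    (hind : ∀ i, IndepFun K (X i) μ) (c : ℝ≥0∞) (hc : ∀ i, ∫⁻ ω, X i ω ∂μ = c) :
    ∫⁻ ω, ∑ i ∈ range (K ω), X i ω ∂μ = c * ∫⁻ ω, (K ω : ℝ≥0∞) ∂μ := by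
  have hpt : ∀ ω, ∑ i ∈ range (K ω), X i ω
      = ∑' i : ℕ, (if i < K ω then (1 : ℝ≥0∞) else 0) * X i ω := by
    intro ω
    rw [tsum_eq_sum (s := range (K ω)) (by
      intro i hi
      simp only [Finset.mem_range, not_lt] at hi
      simp [Nat.not_lt.mpr hi])]
    exact Finset.sum_congr rfl fun i hi => by simp [Finset.mem_range.mp hi]
  simp_rw [hpt]
  have hmeas : ∀ i : ℕ, Measurable fun ω => (if i < K ω then (1 : ℝ≥0∞) else 0) * X i ω := by
    intro i
    exact (Measurable.ite (measurableSet_lt measurable_const hK) measurable_const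
      measurable_const).mul (hX i)
  rw [lintegral_tsum (fun i => (hmeas i).aemeasurable)]
  have hterm : ∀ i : ℕ, ∫⁻ ω, (if i < K ω then (1 : ℝ≥0∞) else 0) * X i ω ∂μ
      = c * ∫⁻ ω, (if i < K ω then (1 : ℝ≥0∞) else 0) ∂μ := by
    intro i
    have hindi : IndepFun (fun ω => if i < K ω then (1 : ℝ≥0∞) else 0) (X i) μ := by
      have := (hind i).comp (φ := fun n : ℕ => if i < n then (1 : ℝ≥0∞) else 0)
        (ψ := id) (measurable_from_top) measurable_id
      exact this
    have hm1 : Measurable fun ω => (if i < K ω then (1 : ℝ≥0∞) else 0) :=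
      (measurable_from_top (f := fun n : ℕ => if i < n then (1 : ℝ≥0∞) else 0)).comp hK
    rw [lintegral_mul_eq_lintegral_mul_lintegral_of_indepFun'' hm1.aemeasurable
      (hX i).aemeasurable hindi, hc i, mul_comm]
  simp_rw [hterm]
  rw [ENNReal.tsum_mul_left]
  congr 1
  have hm2 : ∀ i : ℕ, AEMeasurable (fun ω => (if i < K ω then (1 : ℝ≥0∞) else 0)) μ :=
    fun i => ((measurable_from_top (f := fun n : ℕ =>
      if i < n then (1 : ℝ≥0∞) else 0)).comp hK).aemeasurable
  rw [← lintegral_tsum hm2]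
  exact lintegral_congr fun ω => tsum_ite_lt (K ω)

end wald

section meanrec
variable {Ω : Type*} [MeasurableSpace Ω] {μ : Measure Ω} [IsProbabilityMeasure μ] {d : ℕ}

lemma piComp_mean (N : Matrix (Fin d) (Fin d) ℝ≥0∞) :
    ∀ (n : ℕ) (A : ℕ → Fin d → ℕ → Ω → Fin d → ℕ),
      (∀ m j i, Measurable (A m j i)) →
      iIndepFun (fun p : ℕ × Fin d × ℕ => A p.1 p.2.1 p.2.2) μ →
      (∀ m j i l, ∫⁻ ω, (A m j i ω l : ℝ≥0∞) ∂μ = N j l) →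
      ∀ (k : Fin d → ℕ) (l : Fin d),
        ∫⁻ ω, (PiComp A n (fun _ => k) ω l : ℝ≥0∞) ∂μ = ∑ j, (k j : ℝ≥0∞) * (N ^ n) j l := by
  intro n
  induction n with
  | zero =>
    intro A _ _ _ k l
    simp [PiComp, Matrix.one_apply, lintegral_const, Finset.sum_ite_eq, Finset.mem_univ]
  | succ n ih =>
    intro A hmeas hindep hN k l
    set A' : ℕ → Fin d → ℕ → Ω → Fin d → ℕ := fun m => A (m + 1) with hA'
    set K := PiComp A' n (fun _ => k) with hK
    have hmeas' : ∀ m j i, Measurable (A' m j i) := fun m => hmeas (m + 1)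
    have hinj : Function.Injective (fun p : ℕ × Fin d × ℕ => (p.1 + 1, p.2.1, p.2.2)) := by
      intro p q h
      simp only [Prod.mk.injEq, Nat.add_right_cancel_iff] at h
      exact Prod.ext h.1 (Prod.ext h.2.1 h.2.2)
    have hindep' : iIndepFun
        (fun p : ℕ × Fin d × ℕ => A' p.1 p.2.1 p.2.2) μ :=
      iIndepFun_reindex (fun p : ℕ × Fin d × ℕ => (p.1 + 1, p.2.1, p.2.2)) hinj hindep
    have hKmeas : Measurable K := measurable_piComp hmeas' measurable_const n
    have hIH : ∀ jj : Fin d, ∫⁻ ω, (K ω jj : ℝ≥0∞) ∂μ = ∑ m, (k m : ℝ≥0∞) * (N ^ n) m jj :=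
      fun jj => ih A' hmeas' hindep' (fun m j i l => hN (m + 1) j i l) k jj
    -- independence of K with each A 0 j i
    have hindKA : ∀ (j : Fin d) (i : ℕ) (jj : Fin d),
        IndepFun (fun ω => K ω jj) (fun ω => (A 0 j i ω l : ℝ≥0∞)) μ := by
      intro j i jj
      set S : Set (ℕ × Fin d × ℕ) := {p | 0 < p.1} with hS
      have hjS : ((0, j, i) : ℕ × Fin d × ℕ) ∉ S := by simp [hS]
      have hbundle := indepFun_bundle (f := fun p : ℕ × Fin d × ℕ => A p.1 p.2.1 p.2.2)
        (fun p => hmeas p.1 p.2.1 p.2.2) hindep S hjS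
      -- canonical process on (S → (Fin d → ℕ))
      set Acan : ℕ → Fin d → ℕ → (S → (Fin d → ℕ)) → Fin d → ℕ :=
        fun m j' i' x => x ⟨(m + 1, j', i'), by simp [hS]⟩ with hAcan
      have hAcanmeas : ∀ m j' i', Measurable (Acan m j' i') :=
        fun m j' i' => measurable_pi_apply _
      set G : (S → (Fin d → ℕ)) → ℕ := fun x => PiComp Acan n (fun _ => k) x jj with hG
      have hGmeas : Measurable G :=
        (measurable_pi_apply jj).comp (measurable_piComp hAcanmeas measurable_const n)
      set ψ : (Fin d → ℕ) → ℝ≥0∞ := fun v => (v l : ℝ≥0∞) with hψ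
      have hψmeas : Measurable ψ := measurable_of_countable _
      have hcomp := hbundle.comp hGmeas hψmeas
      have heq : (G ∘ fun ω (p : S) => A p.1.1 p.1.2.1 p.1.2.2 ω) = fun ω => K ω jj := by
        funext ω
        show G (fun p : S => A p.1.1 p.1.2.1 p.1.2.2 ω) = K ω jj
        rw [hG, hK]
        have hc := piComp_congr (A := A') (A' := Acan) (Z := fun _ : Ω => k)
          (Z' := fun _ => k) (ω := ω) (ω' := fun p : S => A p.1.1 p.1.2.1 p.1.2.2 ω)
          (fun m j' i' => rfl) rfl n
        rw [hc]
      rw [heq] at hcomp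
      exact hcomp
    -- unfold one step
    have hunfold : ∀ ω, ((PiComp A (n + 1) (fun _ => k) ω l : ℕ) : ℝ≥0∞)
        = ∑ j, ∑ i ∈ range (K ω j), ((A 0 j i ω l : ℕ) : ℝ≥0∞) := by
      intro ω
      show (((theta (A 0) (K ω) ω) l : ℕ) : ℝ≥0∞) = _
      rw [theta]
      push_cast
      rfl
    simp_rw [hunfold]
    have hmeasj : ∀ j : Fin d, Measurable fun ω => ∑ i ∈ range (K ω j), ((A 0 j i ω l : ℕ) : ℝ≥0∞) := by
      intro j
      exact meas_nat_cases ((measurable_pi_apply j).comp hKmeas)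
        (fun m => Finset.measurable_sum _ fun i _ =>
          (measurable_of_countable (fun v : Fin d → ℕ => (v l : ℝ≥0∞))).comp (hmeas 0 j i))
    rw [lintegral_finset_sum _ (fun j _ => hmeasj j)]
    have hwald : ∀ j : Fin d, ∫⁻ ω, ∑ i ∈ range (K ω j), ((A 0 j i ω l : ℕ) : ℝ≥0∞) ∂μ
        = N j l * ∫⁻ ω, (K ω j : ℝ≥0∞) ∂μ := by
      intro j
      exact wald (fun ω => K ω j) ((measurable_pi_apply j).comp hKmeas)
        (fun i ω => (A 0 j i ω l : ℝ≥0∞))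
        (fun i => (measurable_of_countable (fun v : Fin d → ℕ => (v l : ℝ≥0∞))).comp (hmeas 0 j i))
        (fun i => hindKA j i j) (N j l) (fun i => hN 0 j i l)
    simp_rw [hwald, hIH]
    rw [pow_succ]
    simp_rw [Matrix.mul_apply, Finset.mul_sum]
    rw [Finset.sum_comm]
    exact Finset.sum_congr rfl fun m _ => Finset.sum_congr rfl fun j _ => by ring

end meanrec

section spectral
attribute [local instance] Matrix.linftyOpNormedRing Matrix.linftyOpNormedAlgebra

lemma matrix_pow_bound {d : ℕ} (M : Matrix (Fin d) (Fin d) ℝ)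
    (hM0 : ∀ j l, 0 ≤ M j l)
    (hsub : spectralRadius ℂ (M.map Complex.ofReal) < 1) :
    ∃ (C : ℝ≥0∞) (r : ℝ≥0∞), C < ⊤ ∧ 0 < r ∧ r < 1 ∧
      ∀ n j l, ENNReal.ofReal ((M ^ n) j l) ≤ C * r ^ n := by
  classical
  have hcomp : CompleteSpace (Matrix (Fin d) (Fin d) ℂ) := FiniteDimensional.complete ℂ _
  set X : Matrix (Fin d) (Fin d) ℂ := M.map Complex.ofReal with hX
  have hXpow : ∀ n : ℕ, X ^ n = (M ^ n).map Complex.ofReal := by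
    intro n
    have : X = Complex.ofRealHom.mapMatrix M := rfl
    rw [this, ← map_pow, RingHom.mapMatrix_apply]
    rfl
  have hMn0 : ∀ (n : ℕ) j l, 0 ≤ (M ^ n) j l := by
    intro n
    induction n with
    | zero => intro j l; by_cases h : j = l <;> simp [pow_zero, Matrix.one_apply, h]
    | succ n ih =>
      intro j l
      rw [pow_succ, Matrix.mul_apply]
      exact Finset.sum_nonneg fun m _ => mul_nonneg (ih j m) (hM0 m l)
  have entry_le : ∀ (n : ℕ) (j l : Fin d), ENNReal.ofReal ((M ^ n) j l) ≤ (‖X ^ n‖₊ : ℝ≥0∞) := by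
    intro n j l
    have h1 : (M ^ n) j l ≤ ‖(X ^ n) j l‖ := by
      rw [hXpow]
      simp only [Matrix.map_apply, Complex.norm_real]
      exact le_abs_self _
    have h2 : ‖(X ^ n) j l‖₊ ≤ ‖X ^ n‖₊ := by
      rw [Matrix.linfty_opNNNorm_def]
      exact le_trans (Finset.single_le_sum (f := fun l' => ‖(X ^ n) j l'‖₊)
        (fun _ _ => zero_le) (Finset.mem_univ l))
        (Finset.le_sup (f := fun i => ∑ j2, ‖(X ^ n) i j2‖₊) (Finset.mem_univ j))
    calc ENNReal.ofReal ((M ^ n) j l) ≤ ENNReal.ofReal ‖(X ^ n) j l‖ :=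
          ENNReal.ofReal_le_ofReal h1
      _ = (‖(X ^ n) j l‖₊ : ℝ≥0∞) := ofReal_norm _
      _ ≤ _ := ENNReal.coe_le_coe.mpr h2
  have hten := spectrum.pow_nnnorm_pow_one_div_tendsto_nhds_spectralRadius X
  obtain ⟨r', hr'1, hr'2⟩ := exists_between hsub
  set r : ℝ≥0∞ := max r' (1 / 2) with hr
  have hr0 : 0 < r := lt_of_lt_of_le (by norm_num) (le_max_right _ _)
  have hr1 : r < 1 := max_lt hr'2 (by norm_num)
  have hrT : r ≠ ⊤ := (lt_trans hr1 (by norm_num)).ne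
  have hev : ∀ᶠ n : ℕ in Filter.atTop, (‖X ^ n‖₊ : ℝ≥0∞) ^ (1 / (n : ℝ)) < r' :=
    hten.eventually_lt_const hr'1
  obtain ⟨n₀, hn₀⟩ := Filter.eventually_atTop.mp hev
  have hgeo : ∀ n : ℕ, max n₀ 1 ≤ n → (‖X ^ n‖₊ : ℝ≥0∞) ≤ r ^ n := by
    intro n hn
    have hn1 : 1 ≤ n := le_trans (le_max_right _ _) hn
    have hnn : (n : ℝ) ≠ 0 := Nat.cast_ne_zero.mpr (by omega)
    have h := (hn₀ n (le_trans (le_max_left _ _) hn)).le.trans (le_max_left r' (1 / 2))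
    have h2 := ENNReal.rpow_le_rpow h (by positivity : (0:ℝ) ≤ (n : ℝ))
    rw [← ENNReal.rpow_mul, one_div, inv_mul_cancel₀ hnn, ENNReal.rpow_one,
      ENNReal.rpow_natCast] at h2
    exact h2
  set C0 : ℝ≥0∞ := ∑ n ∈ Finset.range (max n₀ 1), ∑ j, ∑ l,
    ENNReal.ofReal ((M ^ n) j l) / r ^ n with hC0
  refine ⟨max 1 C0, r, ?_, hr0, hr1, ?_⟩
  · refine max_lt ENNReal.one_lt_top ?_
    rw [hC0]
    refine ENNReal.sum_lt_top.mpr fun n _ => ENNReal.sum_lt_top.mpr fun j _ =>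
      ENNReal.sum_lt_top.mpr fun l _ => ?_
    exact ENNReal.div_lt_top ENNReal.ofReal_ne_top (pow_ne_zero n hr0.ne')
  · intro n j l
    by_cases hn : max n₀ 1 ≤ n
    · calc ENNReal.ofReal ((M ^ n) j l) ≤ (‖X ^ n‖₊ : ℝ≥0∞) := entry_le n j l
        _ ≤ r ^ n := hgeo n hn
        _ = 1 * r ^ n := (one_mul _).symm
        _ ≤ max 1 C0 * r ^ n := mul_le_mul_left (le_max_left _ _) _
    · push_neg at hn
      have hterm : ENNReal.ofReal ((M ^ n) j l) / r ^ n ≤ C0 := by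
        rw [hC0]
        refine le_trans ?_ (Finset.single_le_sum
          (f := fun n' => ∑ j', ∑ l', ENNReal.ofReal ((M ^ n') j' l') / r ^ n')
          (fun _ _ => zero_le) (Finset.mem_range.mpr hn))
        refine le_trans ?_ (Finset.single_le_sum
          (f := fun j' => ∑ l', ENNReal.ofReal ((M ^ n) j' l') / r ^ n)
          (fun _ _ => zero_le) (Finset.mem_univ j))
        exact Finset.single_le_sum (f := fun l' => ENNReal.ofReal ((M ^ n) j l') / r ^ n)
          (fun _ _ => zero_le) (Finset.mem_univ l)
      have : ENNReal.ofReal ((M ^ n) j l) = (ENNReal.ofReal ((M ^ n) j l) / r ^ n) * r ^ n :=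
        (ENNReal.div_mul_cancel (pow_ne_zero n hr0.ne') (ENNReal.pow_ne_top hrT)).symm
      rw [this]
      exact mul_le_mul_left (hterm.trans (le_max_right _ _)) _

end spectral

section analysis

lemma pow_ofReal_matrix {d : ℕ} (M : Matrix (Fin d) (Fin d) ℝ) (hM0 : ∀ j l, 0 ≤ M j l)
    (N : Matrix (Fin d) (Fin d) ℝ≥0∞) (hN : ∀ j l, N j l = ENNReal.ofReal (M j l)) :
    ∀ (n : ℕ) (j l : Fin d), (N ^ n) j l = ENNReal.ofReal ((M ^ n) j l) := by
  have hMn0 : ∀ (n : ℕ) (j l : Fin d), 0 ≤ (M ^ n) j l := by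
    intro n
    induction n with
    | zero => intro j l; by_cases h : j = l <;> simp [pow_zero, Matrix.one_apply, h]
    | succ n ih =>
      intro j l
      rw [pow_succ, Matrix.mul_apply]
      exact Finset.sum_nonneg fun m _ => mul_nonneg (ih j m) (hM0 m l)
  intro n
  induction n with
  | zero =>
    intro j l
    by_cases h : j = l <;> simp [pow_zero, Matrix.one_apply, h]
  | succ n ih =>
    intro j l
    rw [pow_succ, pow_succ, Matrix.mul_apply, Matrix.mul_apply,
      ENNReal.ofReal_sum_of_nonneg (fun m _ => mul_nonneg (hMn0 n j m) (hM0 m l))]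
    exact Finset.sum_congr rfl fun m _ => by
      rw [ih j m, hN m l, ENNReal.ofReal_mul (hMn0 n j m)]

lemma jensen_rpow {Ω : Type*} [MeasurableSpace Ω] {μ : Measure Ω} [IsProbabilityMeasure μ]
    {f : Ω → ℝ≥0∞} (hf : AEMeasurable f μ) {α : ℝ} (hα0 : 0 ≤ α) (hα1 : α ≤ 1) :
    ∫⁻ ω, f ω ^ α ∂μ ≤ (∫⁻ ω, f ω ∂μ) ^ α := by
  have h := ENNReal.lintegral_mul_norm_pow_le (μ := μ) hf aemeasurable_const (g := fun _ => 1)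
    hα0 (by linarith : (0:ℝ) ≤ 1 - α) (by ring)
  simpa using h

lemma tsum_rpow_le {f : ℕ → ℝ≥0∞} {α : ℝ} (hα0 : 0 < α) (hα1 : α ≤ 1) :
    (∑' n, f n) ^ α ≤ ∑' n, f n ^ α := by
  have hfin : ∀ s : Finset ℕ, (∑ i ∈ s, f i) ^ α ≤ ∑ i ∈ s, f i ^ α := by
    intro s
    induction s using Finset.induction with
    | empty => simp [ENNReal.zero_rpow_of_pos hα0]
    | insert _ _ hnotmem ih =>
      rw [Finset.sum_insert hnotmem, Finset.sum_insert hnotmem]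
      exact le_trans (ENNReal.rpow_add_le_add_rpow _ _ hα0.le hα1) (add_le_add_right ih _)
  have h1 : ∀ s : Finset ℕ, (∑ i ∈ s, f i) ^ α ≤ ∑' i, f i ^ α :=
    fun s => le_trans (hfin s) (ENNReal.sum_le_tsum s)
  have key : ∑' n, f n ≤ (∑' n, f n ^ α) ^ (1 / α) := by
    rw [ENNReal.tsum_eq_iSup_sum]
    refine iSup_le fun s => ?_
    have h2 := ENNReal.rpow_le_rpow (h1 s) (by positivity : (0:ℝ) ≤ 1 / α)
    rwa [← ENNReal.rpow_mul, mul_one_div, div_self hα0.ne', ENNReal.rpow_one] at h2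
  have h3 := ENNReal.rpow_le_rpow key hα0.le
  rwa [← ENNReal.rpow_mul, one_div, inv_mul_cancel₀ hα0.ne', ENNReal.rpow_one] at h3

end analysis

/-- Main theorem, case `0 < α < 1`: for a subcritical multitype Galton–Watson
process with immigration, if `𝔼‖A‖ < ∞` for every offspring type (automatic by subcriticality) and
`𝔼‖B‖^α < ∞`, then the stationary random vector
`Y = ∑ₙ Πₙ ∘ B` has `𝔼‖Y‖^α < ∞`. -/
theorem stationary_moment_lt_top_concave
    {Ω : Type*} [MeasureSpace Ω] [IsProbabilityMeasure (ℙ : Measure Ω)]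
    (d : ℕ) (A : ℕ → Fin d → ℕ → Ω → Fin d → ℕ) (B : ℕ → Ω → Fin d → ℕ)
    (hmeasA : ∀ n j i, Measurable (A n j i)) (hmeasB : ∀ n, Measurable (B n))
    (hindep : iIndepFun
      (Sum.elim (fun p : ℕ × Fin d × ℕ => A p.1 p.2.1 p.2.2) B :
        (ℕ × Fin d × ℕ) ⊕ ℕ → Ω → Fin d → ℕ) ℙ)
    (hidentA : ∀ n j i, IdentDistrib (A n j i) (A 0 j 0) ℙ ℙ)
    (hidentB : ∀ n, IdentDistrib (B n) (B 0) ℙ ℙ)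
    (M : Matrix (Fin d) (Fin d) ℝ)
    (hM : ∀ j l, M j l = ∫ ω, (A 0 j 0 ω l : ℝ) ∂ℙ)
    (hsub : spectralRadius ℂ (M.map (Complex.ofReal)) < 1)
    (α : ℝ) (hα0 : 0 < α) (hα1 : α < 1)
    (hAmom : ∀ j, ∫⁻ ω, ((∑ l, A 0 j 0 ω l : ℕ) : ℝ≥0∞) ∂ℙ < ⊤)
    (hBmom : ∫⁻ ω, ((∑ l, B 0 ω l : ℕ) : ℝ≥0∞) ^ α ∂ℙ < ⊤) :
    ∫⁻ (ω : Ω),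
        (∑' n : ℕ, ((∑ l, PiComp A n (B n) ω l : ℕ) : ℝ≥0∞)) ^ α ∂ℙ < ⊤ := by
  classical
  set nrm : (Fin d → ℕ) → ℝ≥0∞ := fun v => ((∑ l, v l : ℕ) : ℝ≥0∞) with hnrm
  show ∫⁻ ω, (∑' n : ℕ, nrm (PiComp A n (B n) ω)) ^ α ∂ℙ < ⊤
  -- independence of the A-family alone
  have hAfam : iIndepFun
      (fun p : ℕ × Fin d × ℕ => A p.1 p.2.1 p.2.2) ℙ := by
    have h := iIndepFun_reindex
      (f := Sum.elim (fun p : ℕ × Fin d × ℕ => A p.1 p.2.1 p.2.2) B)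
      (Sum.inl : (ℕ × Fin d × ℕ) → (ℕ × Fin d × ℕ) ⊕ ℕ) Sum.inl_injective hindep
    exact h
  -- the ℝ≥0∞-valued mean matrix
  set N : Matrix (Fin d) (Fin d) ℝ≥0∞ :=
    Matrix.of fun j l => ∫⁻ ω, ((A 0 j 0 ω l : ℕ) : ℝ≥0∞) ∂ℙ with hNdef
  have hNall : ∀ m j i l, ∫⁻ ω, ((A m j i ω l : ℕ) : ℝ≥0∞) ∂ℙ = N j l := by
    intro m j i l
    have hu : Measurable (fun v : Fin d → ℕ => ((v l : ℕ) : ℝ≥0∞)) := measurable_of_countable _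
    exact ((hidentA m j i).comp hu).lintegral_eq
  have hcomp_fin : ∀ j l, ∫⁻ ω, ((A 0 j 0 ω l : ℕ) : ℝ≥0∞) ∂ℙ < ⊤ := by
    intro j l
    refine lt_of_le_of_lt (lintegral_mono fun ω => ?_) (hAmom j)
    exact Nat.cast_le.mpr (Finset.single_le_sum
      (f := fun l' => A 0 j 0 ω l') (fun _ _ => Nat.zero_le _) (Finset.mem_univ l))
  have hcomp_int : ∀ j l, Integrable (fun ω => ((A 0 j 0 ω l : ℕ) : ℝ)) ℙ := by
    intro j l
    refine ⟨((measurable_of_countable (fun v : Fin d → ℕ => ((v l : ℕ) : ℝ))).comp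
      (hmeasA 0 j 0)).aestronglyMeasurable, ?_⟩
    show ∫⁻ ω, (‖((A 0 j 0 ω l : ℕ) : ℝ)‖₊ : ℝ≥0∞) ∂ℙ < ⊤
    have : ∀ ω : Ω, (‖((A 0 j 0 ω l : ℕ) : ℝ)‖₊ : ℝ≥0∞) = ((A 0 j 0 ω l : ℕ) : ℝ≥0∞) := by
      intro ω
      simp [Real.nnnorm_natCast]
    simp_rw [this]
    exact hcomp_fin j l
  have hM0 : ∀ j l, 0 ≤ M j l := by
    intro j l
    rw [hM j l]
    exact integral_nonneg fun ω => by positivity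
  have hNM : ∀ j l, N j l = ENNReal.ofReal (M j l) := by
    intro j l
    rw [hM j l, MeasureTheory.ofReal_integral_eq_lintegral_ofReal (hcomp_int j l)
      (Filter.Eventually.of_forall fun ω => by positivity)]
    rw [hNdef]
    simp only [Matrix.of_apply]
    exact lintegral_congr fun ω => by rw [ENNReal.ofReal_natCast]
  obtain ⟨C, r, hC, hr0, hr1, hpowbd⟩ := matrix_pow_bound M hM0 hsub
  have hNpow : ∀ (n : ℕ) (j l : Fin d), (N ^ n) j l ≤ C * r ^ n := by
    intro n j l
    rw [pow_ofReal_matrix M hM0 N hNM n j l]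
    exact hpowbd n j l
  -- mean bound for a deterministic start k
  have hmean : ∀ (n : ℕ) (k : Fin d → ℕ),
      ∫⁻ ω, nrm (PiComp A n (fun _ => k) ω) ∂ℙ ≤ nrm k * ((d : ℝ≥0∞) * (C * r ^ n)) := by
    intro n k
    have h1 : ∀ ω, nrm (PiComp A n (fun _ => k) ω)
        = ∑ l, ((PiComp A n (fun _ => k) ω l : ℕ) : ℝ≥0∞) := by
      intro ω
      show ((∑ l, PiComp A n (fun _ => k) ω l : ℕ) : ℝ≥0∞) = _
      push_cast
      rfl
    simp_rw [h1]
    have hmeas' : ∀ l ∈ (Finset.univ : Finset (Fin d)),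
        Measurable fun ω => ((PiComp A n (fun _ => k) ω l : ℕ) : ℝ≥0∞) := fun l _ =>
      (measurable_of_countable (fun v : Fin d → ℕ => ((v l : ℕ) : ℝ≥0∞))).comp
        (measurable_piComp hmeasA measurable_const n)
    rw [lintegral_finset_sum _ hmeas']
    have h2 : ∀ l : Fin d, ∫⁻ ω, ((PiComp A n (fun _ => k) ω l : ℕ) : ℝ≥0∞) ∂ℙ
        = ∑ j, (k j : ℝ≥0∞) * (N ^ n) j l :=
      fun l => piComp_mean N n A hmeasA hAfam hNall k l
    simp_rw [h2]
    have h3 : ∀ l : Fin d, ∑ j, (k j : ℝ≥0∞) * (N ^ n) j l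
        ≤ ∑ j, (k j : ℝ≥0∞) * (C * r ^ n) :=
      fun l => Finset.sum_le_sum fun j _ => mul_le_mul_right (hNpow n j l) _
    refine le_trans (Finset.sum_le_sum fun l _ => h3 l) ?_
    rw [Finset.sum_const, Finset.card_univ, Fintype.card_fin, ← Finset.sum_mul]
    have h4 : (nrm k : ℝ≥0∞) = ∑ j, (k j : ℝ≥0∞) := by
      show ((∑ j, k j : ℕ) : ℝ≥0∞) = _
      push_cast
      rfl
    rw [h4, nsmul_eq_mul]
    ring_nf
    exact le_refl _
  -- the per-generation bound
  set EB : ℝ≥0∞ := ∫⁻ ω, nrm (B 0 ω) ^ α ∂ℙ with hEBdef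
  have hbmeas : Measurable (fun ω (p : ℕ × Fin d × ℕ) => A p.1 p.2.1 p.2.2 ω) :=
    measurable_pi_lambda _ fun p => hmeasA p.1 p.2.1 p.2.2
  have hSn : ∀ n : ℕ, ∫⁻ ω, nrm (PiComp A n (B n) ω) ^ α ∂ℙ
      ≤ ((d : ℝ≥0∞) * (C * r ^ n)) ^ α * EB := by
    intro n
    set bund : Ω → ((ℕ × Fin d × ℕ) → (Fin d → ℕ)) := fun ω p => A p.1 p.2.1 p.2.2 ω with hbund
    have hIndep : IndepFun (B n) bund ℙ := by
      set S : Set ((ℕ × Fin d × ℕ) ⊕ ℕ) := Set.range Sum.inl with hS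
      have hjS : (Sum.inr n : (ℕ × Fin d × ℕ) ⊕ ℕ) ∉ S := by simp [hS]
      have h1 := indepFun_bundle
        (f := Sum.elim (fun p : ℕ × Fin d × ℕ => A p.1 p.2.1 p.2.2) B)
        (fun i => by
          cases i with
          | inl p => exact hmeasA p.1 p.2.1 p.2.2
          | inr m => exact hmeasB m)
        hindep S hjS
      have hρmeas : Measurable (fun (x : S → (Fin d → ℕ)) (p : ℕ × Fin d × ℕ) =>
          x ⟨Sum.inl p, ⟨p, rfl⟩⟩) :=
        measurable_pi_lambda _ fun p => measurable_pi_apply _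
      exact (h1.comp hρmeas measurable_id).symm
    have hBP : IsProbabilityMeasure (Measure.map (B n) ℙ) :=
      Measure.isProbabilityMeasure_map (hmeasB n).aemeasurable
    have hAP : IsProbabilityMeasure (Measure.map bund ℙ) :=
      Measure.isProbabilityMeasure_map hbmeas.aemeasurable
    have hmap : Measure.map (fun ω => (B n ω, bund ω)) ℙ
        = (Measure.map (B n) ℙ).prod (Measure.map bund ℙ) :=
      (indepFun_iff_map_prod_eq_prod_map_map (hmeasB n).aemeasurable
        hbmeas.aemeasurable).mp hIndep
    set Acan : ℕ → Fin d → ℕ → ((Fin d → ℕ) × ((ℕ × Fin d × ℕ) → (Fin d → ℕ))) → Fin d → ℕ :=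
      fun m j i q => q.2 (m, j, i) with hAcan
    have hAcanMeas : ∀ m j i, Measurable (Acan m j i) :=
      fun m j i => (measurable_pi_apply _).comp measurable_snd
    set F : ((Fin d → ℕ) × ((ℕ × Fin d × ℕ) → (Fin d → ℕ))) → ℝ≥0∞ :=
      fun q => nrm (PiComp Acan n Prod.fst q) with hFdef
    have hFmeas : Measurable F :=
      (measurable_of_countable nrm).comp (measurable_piComp hAcanMeas measurable_fst n)
    have hFeq : ∀ ω, F (B n ω, bund ω) = nrm (PiComp A n (B n) ω) := by
      intro ω
      rw [hFdef]
      show nrm (PiComp Acan n Prod.fst (B n ω, bund ω)) = nrm (PiComp A n (B n) ω)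
      congr 1
      exact (piComp_congr (A := A) (A' := Acan) (Z := B n) (Z' := Prod.fst)
        (ω := ω) (ω' := (B n ω, bund ω)) (fun m j i => rfl) rfl n).symm
    have hinner : ∀ b : Fin d → ℕ,
        ∫⁻ a, F (b, a) ∂(Measure.map bund ℙ)
          = ∫⁻ ω, nrm (PiComp A n (fun _ => b) ω) ∂ℙ := by
      intro b
      have hFb : Measurable fun a => F (b, a) := hFmeas.comp measurable_prodMk_left
      rw [lintegral_map hFb hbmeas]
      refine lintegral_congr fun ω => ?_
      show F (b, bund ω) = _
      rw [hFdef]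
      show nrm (PiComp Acan n Prod.fst (b, bund ω)) = _
      congr 1
      exact (piComp_congr (A := A) (A' := Acan) (Z := fun _ => b) (Z' := Prod.fst)
        (ω := ω) (ω' := (b, bund ω)) (fun m j i => rfl) rfl n).symm
    calc ∫⁻ ω, nrm (PiComp A n (B n) ω) ^ α ∂ℙ
        = ∫⁻ ω, F (B n ω, bund ω) ^ α ∂ℙ := by
          refine lintegral_congr fun ω => ?_
          rw [hFeq ω]
      _ = ∫⁻ q, F q ^ α ∂(Measure.map (fun ω => (B n ω, bund ω)) ℙ) :=
          (lintegral_map (hFmeas.pow_const α) ((hmeasB n).prodMk hbmeas)).symm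
      _ = ∫⁻ b, ∫⁻ a, F (b, a) ^ α ∂(Measure.map bund ℙ) ∂(Measure.map (B n) ℙ) := by
          rw [hmap, lintegral_prod _ (hFmeas.pow_const α).aemeasurable]
      _ ≤ ∫⁻ b, (nrm b * ((d : ℝ≥0∞) * (C * r ^ n))) ^ α ∂(Measure.map (B n) ℙ) := by
          refine lintegral_mono fun b => ?_
          have hFb : Measurable fun a => F (b, a) := hFmeas.comp measurable_prodMk_left
          refine le_trans (jensen_rpow hFb.aemeasurable hα0.le hα1.le) ?_
          refine ENNReal.rpow_le_rpow ?_ hα0.le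
          rw [hinner b]
          exact hmean n b
      _ = ((d : ℝ≥0∞) * (C * r ^ n)) ^ α * EB := by
          have hmr : ∀ b : Fin d → ℕ, (nrm b * ((d : ℝ≥0∞) * (C * r ^ n))) ^ α
              = nrm b ^ α * ((d : ℝ≥0∞) * (C * r ^ n)) ^ α :=
            fun b => ENNReal.mul_rpow_of_nonneg _ _ hα0.le
          simp_rw [hmr]
          rw [lintegral_mul_const _ ((measurable_of_countable nrm).pow_const α)]
          rw [mul_comm]
          congr 1
          rw [lintegral_map ((measurable_of_countable nrm).pow_const α) (hmeasB n)]
          exact ((hidentB n).comp (measurable_of_countable fun v => nrm v ^ α)).lintegral_eq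
  -- assemble
  have hSmeas : ∀ n, Measurable fun ω => nrm (PiComp A n (B n) ω) :=
    fun n => (measurable_of_countable nrm).comp (measurable_piComp hmeasA (hmeasB n) n)
  calc ∫⁻ ω, (∑' n : ℕ, nrm (PiComp A n (B n) ω)) ^ α ∂ℙ
      ≤ ∫⁻ ω, ∑' n : ℕ, nrm (PiComp A n (B n) ω) ^ α ∂ℙ :=
        lintegral_mono fun ω => tsum_rpow_le hα0 hα1.le
    _ = ∑' n : ℕ, ∫⁻ ω, nrm (PiComp A n (B n) ω) ^ α ∂ℙ :=
        lintegral_tsum fun n => ((hSmeas n).pow_const α).aemeasurable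
    _ ≤ ∑' n : ℕ, ((d : ℝ≥0∞) * (C * r ^ n)) ^ α * EB := ENNReal.tsum_le_tsum hSn
    _ < ⊤ := by
        have heq : ∀ n : ℕ, ((d : ℝ≥0∞) * (C * r ^ n)) ^ α * EB
            = (((d : ℝ≥0∞) * C) ^ α * EB) * (r ^ α) ^ n := by
          intro n
          rw [show (d : ℝ≥0∞) * (C * r ^ n) = ((d : ℝ≥0∞) * C) * r ^ n by ring,
            ENNReal.mul_rpow_of_nonneg _ _ hα0.le, ← ENNReal.rpow_natCast r n,
            ← ENNReal.rpow_mul, mul_comm (n : ℝ) α, ENNReal.rpow_mul, ENNReal.rpow_natCast]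
          ring
        simp_rw [heq]
        rw [ENNReal.tsum_mul_left, ENNReal.tsum_geometric]
        have hrα : r ^ α < 1 := ENNReal.rpow_lt_one hr1 hα0
        have h1 : ((d : ℝ≥0∞) * C) ^ α * EB < ⊤ := by
          refine ENNReal.mul_lt_top ?_ ?_
          · exact ENNReal.rpow_lt_top_of_nonneg hα0.le
              (ENNReal.mul_ne_top (ENNReal.natCast_ne_top d) hC.ne)
          · exact hBmom
        have h2 : (1 - r ^ α)⁻¹ < ⊤ :=
          ENNReal.inv_lt_top.mpr (tsub_pos_iff_lt.mpr hrα)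
        exact ENNReal.mul_lt_top h1 h2
end
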